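/- arXiv:2504.02785 — 2 statements merged into one kernel-verified Lean document; each statement's English description precedes it below -/
import Mathlib

section
/- Bucketing implies fidelity learning for maximally mixed states on a subspace: let P be a rank-r orthogonal projection, ρ = P/r, and let Π be an orthogonal projection with complement Π̄ = I − Π such that ΠρΠ ≽ Π/(2r) and Π̄ρΠ̄ ≼ Π̄/(2r). Then Π has rank exactly r, and setting ρ̂ = Π/r, we have 1 − F(ρ, ρ̂) ≤ tr(Π̄ρΠ̄), where F denotes the (square-root) fidelity. -/
open scoped ComplexOrder

open scoped MatrixOrder Matrix.Norms.L2Operator in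
/-- The positive semidefinite square root of a matrix (junk value `0` off the PSD cone). -/
noncomputable def msqrt {d : ℕ} (A : Matrix (Fin d) (Fin d) ℂ) :
    Matrix (Fin d) (Fin d) ℂ :=
  letI := Classical.propDecidable A.PosSemidef
  if h : A.PosSemidef then CFC.sqrt A else 0

/-- The (square-root) fidelity `F(ρ,σ) = tr √(√σ ρ √σ)`, extended to PSD matrices. -/
noncomputable def fid {d : ℕ} (ρ σ : Matrix (Fin d) (Fin d) ℂ) : ℝ :=
  ((msqrt (msqrt σ * ρ * msqrt σ)).trace).re


open scoped MatrixOrder Matrix.Norms.L2Operator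

open Matrix

section helpers

variable {d : ℕ}

namespace Matrix.PosSemidef

noncomputable def sqrt {A : Matrix (Fin d) (Fin d) ℂ} (_ : A.PosSemidef) :
    Matrix (Fin d) (Fin d) ℂ :=
  CFC.sqrt A

lemma posSemidef_sqrt {A : Matrix (Fin d) (Fin d) ℂ} (hA : A.PosSemidef) : hA.sqrt.PosSemidef :=
  Matrix.nonneg_iff_posSemidef.mp (CFC.sqrt_nonneg A)

lemma sqrt_mul_self {A : Matrix (Fin d) (Fin d) ℂ} (hA : A.PosSemidef) :
    hA.sqrt * hA.sqrt = A :=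
  CFC.sqrt_mul_sqrt_self A hA.nonneg

lemma sq_sqrt {A : Matrix (Fin d) (Fin d) ℂ} (hA : A.PosSemidef) : hA.sqrt ^ 2 = A :=
  CFC.sq_sqrt A hA.nonneg

lemma eq_sqrt_of_sq_eq {A B : Matrix (Fin d) (Fin d) ℂ} (hB : B.PosSemidef) (hA : A.PosSemidef)
    (h : B ^ 2 = A) : B = hA.sqrt :=
  (CFC.sqrt_unique (by rw [← sq]; exact h) hB.nonneg).symm

lemma sqrt_formula {A : Matrix (Fin d) (Fin d) ℂ} (hA : A.PosSemidef) :
    hA.sqrt = (hA.1.eigenvectorUnitary : Matrix (Fin d) (Fin d) ℂ) *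
      Matrix.diagonal (((↑) : ℝ → ℂ) ∘ Real.sqrt ∘ hA.1.eigenvalues) *
      star (hA.1.eigenvectorUnitary : Matrix (Fin d) (Fin d) ℂ) := by
  rw [Matrix.PosSemidef.sqrt, CFC.sqrt_eq_cfc, cfc_nnreal_eq_real _ A hA.nonneg, hA.1.cfc_eq,
    Matrix.IsHermitian.cfc, Unitary.conjStarAlgAut_apply]
  congr 2
  ext i j
  by_cases h : i = j <;> simp [Matrix.diagonal_apply, h, hA.eigenvalues_nonneg]

end Matrix.PosSemidef

lemma herm_idem_psd {H : Matrix (Fin d) (Fin d) ℂ} (hH : H.IsHermitian) (h2 : H * H = H) :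
    H.PosSemidef := by
  have : Hᴴ * H = H := by rw [hH.eq]; exact h2
  exact this ▸ Matrix.posSemidef_conjTranspose_mul_self H

lemma psd_smul {A : Matrix (Fin d) (Fin d) ℂ} (hA : A.PosSemidef) {c : ℝ} (hc : 0 ≤ c) :
    ((c : ℂ) • A).PosSemidef := by
  refine Matrix.PosSemidef.of_dotProduct_mulVec_nonneg ?_ fun x => ?_
  · rw [Matrix.IsHermitian, Matrix.conjTranspose_smul, hA.1.eq, Complex.star_def,
      Complex.conj_ofReal]
  · rw [Matrix.smul_mulVec, dotProduct_smul, smul_eq_mul]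
    exact mul_nonneg (Complex.zero_le_real.2 hc) (hA.dotProduct_mulVec_nonneg x)

lemma trace_re_nonneg {M : Matrix (Fin d) (Fin d) ℂ} (hM : M.PosSemidef) : 0 ≤ M.trace.re := by
  rw [Matrix.trace, Complex.re_sum]
  refine Finset.sum_nonneg fun i _ => ?_
  have h := hM.dotProduct_mulVec_nonneg (Pi.single i 1)
  have h2 : dotProduct (star (Pi.single i 1)) (M *ᵥ Pi.single i 1) = M.diag i := by
    simp [Matrix.mulVec_single, dotProduct, Pi.single_apply, apply_ite]
  rw [h2] at h
  exact (Complex.le_def.1 h).1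

lemma eig_le_one {A : Matrix (Fin d) (Fin d) ℂ} (hA : A.IsHermitian)
    (h1 : ((1 : Matrix (Fin d) (Fin d) ℂ) - A).PosSemidef) (i : Fin d) :
    hA.eigenvalues i ≤ 1 := by
  have hv := hA.mulVec_eigenvectorBasis i
  set v := ⇑(hA.eigenvectorBasis i) with hvdef
  have hnorm : dotProduct (star v) v = 1 := by
    have h := hA.eigenvectorBasis.orthonormal.1 i
    have : (inner ℂ (hA.eigenvectorBasis i) (hA.eigenvectorBasis i) : ℂ) = 1 := by
      rw [inner_self_eq_norm_sq_to_K, h]; norm_num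
    rw [EuclideanSpace.inner_eq_star_dotProduct, dotProduct_comm] at this
    simpa using this
  have h2 := h1.dotProduct_mulVec_nonneg v
  rw [Matrix.sub_mulVec, Matrix.one_mulVec, hv] at h2
  have h3 : dotProduct (star v) (v - hA.eigenvalues i • v)
      = 1 - (hA.eigenvalues i : ℂ) := by
    rw [dotProduct_sub, dotProduct_smul, hnorm]
    simp [Complex.real_smul]
  rw [h3] at h2
  have h4 : (0:ℂ) ≤ ((1 - hA.eigenvalues i : ℝ) : ℂ) := by push_cast; exact h2
  have := Complex.zero_le_real.1 h4
  linarith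

lemma one_sub_sqrt_psd {A : Matrix (Fin d) (Fin d) ℂ} (hA : A.PosSemidef)
    (h1 : ((1 : Matrix (Fin d) (Fin d) ℂ) - A).PosSemidef) :
    ((1 : Matrix (Fin d) (Fin d) ℂ) - hA.sqrt).PosSemidef := by
  set U : Matrix (Fin d) (Fin d) ℂ := (hA.1.eigenvectorUnitary : Matrix (Fin d) (Fin d) ℂ)
    with hU
  have hUU : U * star U = 1 := Matrix.mem_unitaryGroup_iff.mp hA.1.eigenvectorUnitary.2
  have key : (1 : Matrix (Fin d) (Fin d) ℂ) - hA.sqrt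
      = U * Matrix.diagonal (fun i => ((1 - Real.sqrt (hA.1.eigenvalues i) : ℝ) : ℂ)) *
        star U := by
    have hd : Matrix.diagonal (fun i => ((1 - Real.sqrt (hA.1.eigenvalues i) : ℝ) : ℂ))
        = 1 - Matrix.diagonal ((↑) ∘ Real.sqrt ∘ hA.1.eigenvalues) := by
      rw [← Matrix.diagonal_one, Matrix.diagonal_sub]
      congr 1 with i
      push_cast
      rfl
    rw [hd, Matrix.PosSemidef.sqrt_formula, mul_sub, sub_mul, mul_one, hUU]
  rw [key, show star U = Uᴴ from rfl]
  refine Matrix.PosSemidef.mul_mul_conjTranspose_same ?_ U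
  refine Matrix.posSemidef_diagonal_iff.mpr fun i => ?_
  refine Complex.zero_le_real.2 ?_
  have h2 : hA.1.eigenvalues i ≤ 1 := eig_le_one hA.1 h1 i
  have := Real.sqrt_le_one.mpr h2
  linarith

lemma sqrt_sub_psd {A : Matrix (Fin d) (Fin d) ℂ} (hA : A.PosSemidef)
    (h1 : ((1 : Matrix (Fin d) (Fin d) ℂ) - A).PosSemidef) :
    (hA.sqrt - A).PosSemidef := by
  have hS := hA.posSemidef_sqrt
  have h2 := one_sub_sqrt_psd hA h1
  have key : hS.sqrt * ((1 : Matrix (Fin d) (Fin d) ℂ) - hA.sqrt) * hS.sqrtᴴ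
      = hA.sqrt - A := by
    rw [hS.posSemidef_sqrt.1.eq, mul_sub, mul_one, sub_mul]
    rw [hS.sqrt_mul_self]
    congr 1
    calc hS.sqrt * hA.sqrt * hS.sqrt = hS.sqrt * (hS.sqrt * hS.sqrt) * hS.sqrt := by
          rw [hS.sqrt_mul_self]
      _ = (hS.sqrt * hS.sqrt) * (hS.sqrt * hS.sqrt) := by noncomm_ring
      _ = A := by rw [hS.sqrt_mul_self, hA.sqrt_mul_self]
  exact key ▸ h2.mul_mul_conjTranspose_same hS.sqrt

lemma rank_le_of_ker_le {A B : Matrix (Fin d) (Fin d) ℂ}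
    (h : LinearMap.ker A.mulVecLin ≤ LinearMap.ker B.mulVecLin) : B.rank ≤ A.rank := by
  have ha := LinearMap.finrank_range_add_finrank_ker A.mulVecLin
  have hb := LinearMap.finrank_range_add_finrank_ker B.mulVecLin
  have hk := Submodule.finrank_mono h
  rw [Matrix.rank, Matrix.rank]
  omega

lemma trace_projection (P : Matrix (Fin d) (Fin d) ℂ) (hPproj : P * P = P) :
    P.trace = (P.rank : ℂ) := by
  have hproj : LinearMap.IsProj (LinearMap.range P.mulVecLin) P.mulVecLin := by
    refine ⟨fun x => ⟨x, rfl⟩, ?_⟩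
    rintro x ⟨y, rfl⟩
    show (P.mulVecLin ∘ₗ P.mulVecLin) y = P.mulVecLin y
    rw [← Matrix.mulVecLin_mul, hPproj]
  have ht := hproj.trace
  have h2 : LinearMap.trace ℂ (Fin d → ℂ) P.mulVecLin = P.trace := by
    rw [LinearMap.trace_eq_matrix_trace ℂ (Pi.basisFun ℂ (Fin d)),
      LinearMap.toMatrix_eq_toMatrix', ← Matrix.toLin'_apply' P, LinearMap.toMatrix'_toLin']
  rw [← h2, ht, Matrix.rank]

lemma msqrt_eq {A : Matrix (Fin d) (Fin d) ℂ} (h : A.PosSemidef) : msqrt A = h.sqrt := by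
  rw [msqrt]
  exact dif_pos h

lemma zero_of_nonneg_of_neg_mul_nonneg {z : ℂ} (hz : 0 ≤ z) {c : ℝ} (hc : c < 0)
    (h : 0 ≤ (c : ℂ) * z) : z = 0 := by
  have him : (0:ℂ).im = z.im := (Complex.le_def.1 hz).2
  have hre : 0 ≤ z.re := (Complex.le_def.1 hz).1
  have h2 : 0 ≤ ((c : ℂ) * z).re := (Complex.le_def.1 h).1
  rw [Complex.re_ofReal_mul] at h2
  have hz0 : z.re = 0 := by nlinarith
  apply Complex.ext
  · simpa using hz0
  · simpa using him.symm

end helpers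

/-- Bucketing implies fidelity learning for maximally mixed states on a subspace: let `P` be a
rank-`r` orthogonal projection, `ρ = P/r`, and `Q` an orthogonal projection with
`QρQ ≽ Q/(2r)` and `(1−Q)ρ(1−Q) ≼ (1−Q)/(2r)`.  Then `Q` has rank exactly `r` and, setting
`ρ̂ = Q/r`, one has `1 − F(ρ, ρ̂) ≤ tr((1−Q)ρ(1−Q))`. -/
theorem stmt18 (d r : ℕ) (hr : 0 < r) (P Q : Matrix (Fin d) (Fin d) ℂ)
    (hP : P.IsHermitian) (hPproj : P * P = P) (hPrank : P.rank = r)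
    (hQ : Q.IsHermitian) (hQproj : Q * Q = Q)
    (hbig : (Q * ((r : ℂ)⁻¹ • P) * Q - ((2 * r : ℂ))⁻¹ • Q).PosSemidef)
    (hsmall : (((2 * r : ℂ))⁻¹ • (1 - Q) -
        (1 - Q) * ((r : ℂ)⁻¹ • P) * (1 - Q)).PosSemidef) :
    Q.rank = r ∧
      1 - fid ((r : ℂ)⁻¹ • P) ((r : ℂ)⁻¹ • Q)
        ≤ (((1 - Q) * ((r : ℂ)⁻¹ • P) * (1 - Q)).trace).re := by
  have hr0 : (0:ℝ) < (r:ℝ) := by exact_mod_cast hr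
  have hrC : (r:ℂ) ≠ 0 := by exact_mod_cast hr.ne'
  have hQpsd : Q.PosSemidef := herm_idem_psd hQ hQproj
  have hPpsd : P.PosSemidef := herm_idem_psd hP hPproj
  set A := Q * P * Q with hAdef
  have hApsd : A.PosSemidef := by
    have h := hPpsd.mul_mul_conjTranspose_same Q
    rwa [hQ.eq] at h
  have hbig' : ((r:ℂ)⁻¹ • A - ((2 * r : ℂ))⁻¹ • Q).PosSemidef := by
    have h : Q * ((r : ℂ)⁻¹ • P) * Q = (r:ℂ)⁻¹ • A := by
      rw [hAdef, mul_smul_comm, smul_mul_assoc]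
    rwa [h] at hbig
  -- kernel inclusion 1 : ker A ≤ ker Q
  have hker1 : LinearMap.ker A.mulVecLin ≤ LinearMap.ker Q.mulVecLin := by
    intro x hx
    simp only [LinearMap.mem_ker, Matrix.mulVecLin_apply] at hx ⊢
    have e1 : ((r:ℂ)⁻¹ • A - ((2 * r : ℂ))⁻¹ • Q) *ᵥ x
        = ((-(2 * (r:ℝ))⁻¹ : ℝ) : ℂ) • (Q *ᵥ x) := by
      rw [Matrix.sub_mulVec, Matrix.smul_mulVec, Matrix.smul_mulVec, hx,
        smul_zero, zero_sub, ← neg_smul]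
      congr 1
      push_cast
      ring
    have h := hbig'.dotProduct_mulVec_nonneg x
    rw [e1, dotProduct_smul, smul_eq_mul] at h
    have hneg : (-(2 * (r:ℝ))⁻¹ : ℝ) < 0 := by
      have : (0:ℝ) < (2 * (r:ℝ))⁻¹ := by positivity
      linarith
    have hz0 : dotProduct (star x) (Q *ᵥ x) = 0 :=
      zero_of_nonneg_of_neg_mul_nonneg (hQpsd.dotProduct_mulVec_nonneg x) hneg h
    have hz1 : dotProduct (star (Q *ᵥ x)) (Q *ᵥ x) = 0 := by
      rw [Matrix.star_mulVec, hQ.eq, ← Matrix.dotProduct_mulVec, Matrix.mulVec_mulVec,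
        hQproj]
      exact hz0
    exact dotProduct_star_self_eq_zero.1 hz1
  -- kernel inclusion 2 : ker (Q*P) ≤ ker P
  have hker2 : LinearMap.ker (Q * P).mulVecLin ≤ LinearMap.ker P.mulVecLin := by
    intro x hx
    simp only [LinearMap.mem_ker, Matrix.mulVecLin_apply] at hx ⊢
    set v := P *ᵥ x with hvdef
    have hQv : Q *ᵥ v = 0 := by
      rw [hvdef, Matrix.mulVec_mulVec]; exact hx
    have hPv : P *ᵥ v = v := by
      rw [hvdef, Matrix.mulVec_mulVec, hPproj]
    have h1v : (1 - Q) *ᵥ v = v := by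
      rw [Matrix.sub_mulVec, Matrix.one_mulVec, hQv, sub_zero]
    have e2 : (((2 * r : ℂ))⁻¹ • (1 - Q) - (1 - Q) * ((r : ℂ)⁻¹ • P) * (1 - Q)) *ᵥ v
        = ((-(2 * (r:ℝ))⁻¹ : ℝ) : ℂ) • v := by
      have hm : (1 - Q) * ((r : ℂ)⁻¹ • P) * (1 - Q) = (r:ℂ)⁻¹ • ((1 - Q) * P * (1 - Q)) := by
        rw [mul_smul_comm, smul_mul_assoc]
      have hmv : ((1 - Q) * P * (1 - Q)) *ᵥ v = v := by
        rw [← Matrix.mulVec_mulVec, h1v, ← Matrix.mulVec_mulVec, hPv, h1v]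
      rw [Matrix.sub_mulVec, hm, Matrix.smul_mulVec, Matrix.smul_mulVec,
        h1v, hmv, ← sub_smul]
      congr 1
      push_cast
      field_simp
      ring
    have h := hsmall.dotProduct_mulVec_nonneg v
    rw [e2, dotProduct_smul, smul_eq_mul] at h
    have hneg : (-(2 * (r:ℝ))⁻¹ : ℝ) < 0 := by
      have : (0:ℝ) < (2 * (r:ℝ))⁻¹ := by positivity
      linarith
    have hz0 : dotProduct (star v) v = 0 :=
      zero_of_nonneg_of_neg_mul_nonneg (dotProduct_star_self_nonneg v) hneg h
    exact dotProduct_star_self_eq_zero.1 hz0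
  -- rank chain
  have hrank1 : Q.rank ≤ A.rank := rank_le_of_ker_le hker1
  have hrank2 : A.rank ≤ (Q * P).rank := Matrix.rank_mul_le_left (Q * P) Q
  have hrank3 : (Q * P).rank ≤ P.rank := Matrix.rank_mul_le_right Q P
  have hrank4 : P.rank ≤ (Q * P).rank := rank_le_of_ker_le hker2
  have hrank5 : (Q * P).rank ≤ Q.rank := Matrix.rank_mul_le_left Q P
  have hQrank : Q.rank = r := by omega
  refine ⟨hQrank, ?_⟩
  -- fidelity part
  have hQbarH : ((1 : Matrix (Fin d) (Fin d) ℂ) - Q).IsHermitian := by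
    simpa using Matrix.isHermitian_one.sub hQ
  have hQbarproj : ((1 : Matrix (Fin d) (Fin d) ℂ) - Q) * (1 - Q) = 1 - Q := by
    have h : ((1 : Matrix (Fin d) (Fin d) ℂ) - Q) * (1 - Q) = 1 - Q - Q + Q * Q := by
      noncomm_ring
    rw [h, hQproj]
    abel
  have hQbarpsd := herm_idem_psd hQbarH hQbarproj
  have hPbarH : ((1 : Matrix (Fin d) (Fin d) ℂ) - P).IsHermitian := by
    simpa using Matrix.isHermitian_one.sub hP
  have hPbarproj : ((1 : Matrix (Fin d) (Fin d) ℂ) - P) * (1 - P) = 1 - P := by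
    have h : ((1 : Matrix (Fin d) (Fin d) ℂ) - P) * (1 - P) = 1 - P - P + P * P := by
      noncomm_ring
    rw [h, hPproj]
    abel
  have hPbarpsd := herm_idem_psd hPbarH hPbarproj
  have h1A : ((1 : Matrix (Fin d) (Fin d) ℂ) - A).PosSemidef := by
    have hc : Q * (1 - P) * Qᴴ = Q - A := by
      rw [hQ.eq, mul_sub, mul_one, sub_mul, hQproj, hAdef]
    have he : (1 : Matrix (Fin d) (Fin d) ℂ) - A = (1 - Q) + (Q - A) := by abel
    rw [he, ← hc]
    exact hQbarpsd.add (hPbarpsd.mul_mul_conjTranspose_same Q)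
  set S := hApsd.sqrt with hSdef
  have hSA := sqrt_sub_psd hApsd h1A
  have hSAre : A.trace.re ≤ S.trace.re := by
    have h := trace_re_nonneg hSA
    rw [Matrix.trace_sub, Complex.sub_re] at h
    linarith
  -- compute the fidelity
  have hcast : ((r:ℂ))⁻¹ = (((r:ℝ)⁻¹ : ℝ) : ℂ) := by push_cast; ring
  have hsqQ : msqrt ((r : ℂ)⁻¹ • Q) = (((Real.sqrt r)⁻¹ : ℝ) : ℂ) • Q := by
    have hσpsd : ((r : ℂ)⁻¹ • Q).PosSemidef := by
      rw [hcast]; exact psd_smul hQpsd (by positivity)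
    have hcpsd : ((((Real.sqrt r)⁻¹ : ℝ) : ℂ) • Q).PosSemidef :=
      psd_smul hQpsd (by positivity)
    rw [msqrt_eq hσpsd]
    refine (hcpsd.eq_sqrt_of_sq_eq hσpsd ?_).symm
    rw [smul_pow]
    rw [show Q ^ 2 = Q from by rw [pow_two, hQproj]]
    rw [hcast]
    congr 1
    rw [← Complex.ofReal_pow]
    congr 1
    rw [inv_pow, Real.sq_sqrt hr0.le]
  have hmid : msqrt ((r : ℂ)⁻¹ • Q) * ((r : ℂ)⁻¹ • P) * msqrt ((r : ℂ)⁻¹ • Q)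
      = ((((r:ℝ)⁻¹ * (r:ℝ)⁻¹ : ℝ)) : ℂ) • A := by
    rw [hsqQ, hAdef]
    simp only [smul_mul_assoc, mul_smul_comm, smul_smul]
    congr 1
    have hs : (((Real.sqrt r)⁻¹ : ℝ) : ℂ) * (((Real.sqrt r)⁻¹ : ℝ) : ℂ) = (r:ℂ)⁻¹ := by
      rw [← Complex.ofReal_mul]
      rw [hcast]
      congr 1
      rw [← Real.sqrt_inv]
      exact Real.mul_self_sqrt (by positivity)
    have hrr : ((((r:ℝ)⁻¹ * (r:ℝ)⁻¹ : ℝ)) : ℂ) = (r:ℂ)⁻¹ * (r:ℂ)⁻¹ := by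
      push_cast; ring
    rw [hrr]
    linear_combination (r:ℂ)⁻¹ * hs
  have hfid : fid ((r : ℂ)⁻¹ • P) ((r : ℂ)⁻¹ • Q) = (r:ℝ)⁻¹ * S.trace.re := by
    rw [fid, hmid]
    have hMpsd : (((((r:ℝ)⁻¹ * (r:ℝ)⁻¹ : ℝ)) : ℂ) • A).PosSemidef :=
      psd_smul hApsd (by positivity)
    have hcand : ((((r:ℝ)⁻¹ : ℝ) : ℂ) • S).PosSemidef :=
      psd_smul hApsd.posSemidef_sqrt (by positivity)
    have heq : msqrt (((((r:ℝ)⁻¹ * (r:ℝ)⁻¹ : ℝ)) : ℂ) • A) = (((r:ℝ)⁻¹ : ℝ) : ℂ) • S := by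
      rw [msqrt_eq hMpsd]
      refine (hcand.eq_sqrt_of_sq_eq hMpsd ?_).symm
      rw [smul_pow]
      rw [show S ^ 2 = A from hApsd.sq_sqrt]
      congr 1
      push_cast
      ring
    rw [heq, Matrix.trace_smul, smul_eq_mul, Complex.re_ofReal_mul]
  -- trace identities
  have htrP : P.trace = (r:ℂ) := by rw [trace_projection P hPproj, hPrank]
  have htrA : A.trace = (Q * P).trace := by
    rw [hAdef, Matrix.trace_mul_cycle, hQproj]
  set B := (1 - Q) * P * (1 - Q) with hBdef
  have htrB : B.trace = P.trace - (Q * P).trace := by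
    have hBexp : B = P - Q * P - (P * Q - Q * P * Q) := by
      rw [hBdef]; noncomm_ring
    rw [hBexp, Matrix.trace_sub, Matrix.trace_sub, Matrix.trace_sub, ← htrA, hAdef,
      Matrix.trace_mul_comm P Q, htrA]
    ring
  have hsum : A.trace.re + B.trace.re = (r:ℝ) := by
    have : A.trace + B.trace = (r:ℂ) := by
      rw [htrA, htrB, htrP]; ring
    have h2 := congrArg Complex.re this
    rw [Complex.add_re] at h2
    simpa using h2
  -- right-hand side
  have hRHS : (((1 - Q) * ((r : ℂ)⁻¹ • P) * (1 - Q)).trace).re = (r:ℝ)⁻¹ * B.trace.re := by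
    have hm : (1 - Q) * ((r : ℂ)⁻¹ • P) * (1 - Q) = (r:ℂ)⁻¹ • B := by
      rw [hBdef, mul_smul_comm, smul_mul_assoc]
    rw [hm, Matrix.trace_smul, smul_eq_mul, hcast, Complex.re_ofReal_mul]
  rw [hfid, hRHS]
  have hinv : (0:ℝ) < (r:ℝ)⁻¹ := by positivity
  have hx : (r:ℝ)⁻¹ * A.trace.re ≤ (r:ℝ)⁻¹ * S.trace.re :=
    mul_le_mul_of_nonneg_left hSAre hinv.le
  have hy : (r:ℝ)⁻¹ * A.trace.re = 1 - (r:ℝ)⁻¹ * B.trace.re := by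
    have : A.trace.re = (r:ℝ) - B.trace.re := by linarith
    rw [this, mul_sub, inv_mul_cancel₀ hr0.ne']
  linarith
end

section
/- Cycle-and-swap trace bound: let k ≥ 1, let τ ∈ S_{2k} be a k-cycle on the odd numbers {1,3,…,2k−1}, and τ' ∈ S_{2k} a k-cycle on the even numbers {2,4,…,2k}. For 0 ≤ j ≤ k−1 and a nonempty subset T ⊆ {1,…,k−j}, set μ = (τ·τ')^{-1} · ∏_{i∈T} SWAP_{2i−1,2i} ∈ S_{2k}. Then in the cycle decomposition of μ, every cycle contains at least two elements that are at most 2(k−j); consequently, for any density matrix σ, tr(P(μ) · I^{⊗2(k−j)} ⊗ σ^{⊗2j}) ≤ d^{k−j−1} · tr(σ^{2j}). -/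
open scoped ComplexOrder

/-- The representation of `S_n` on `(ℂ^d)^{⊗n}` permuting tensor factors. -/
noncomputable def permMatrix (d n : ℕ) (π : Equiv.Perm (Fin n)) :
    Matrix (Fin n → Fin d) (Fin n → Fin d) ℂ :=
  Matrix.of fun f g => if ∀ a, f a = g (π⁻¹ a) then 1 else 0

/-- The tensor product `M₁ ⊗ ⋯ ⊗ M_n` of `d×d` matrices, as a matrix on `(ℂ^d)^{⊗n}`. -/
noncomputable def tensorPow {d n : ℕ} (M : Fin n → Matrix (Fin d) (Fin d) ℂ) :
    Matrix (Fin n → Fin d) (Fin n → Fin d) ℂ :=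
  Matrix.of fun f g => ∏ a, M a (f a) (g a)

/-- The transposition of the pair of positions `(2m, 2m+1)` (0-indexed; this is the pair
`(2i−1, 2i)` in 1-indexed notation with `i = m+1`). -/
def swapAt (k : ℕ) (m : Fin k) : Equiv.Perm (Fin (2 * k)) :=
  Equiv.swap ⟨2 * m.val, by have := m.isLt; omega⟩ ⟨2 * m.val + 1, by have := m.isLt; omega⟩

theorem Equiv.Perm.apply_inv_self {α : Type*} (f : Equiv.Perm α) (x : α) : f (f⁻¹ x) = x :=
  Equiv.apply_symm_apply f x

theorem Equiv.Perm.inv_apply_self {α : Type*} (f : Equiv.Perm α) (x : α) : f⁻¹ (f x) = x :=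
  Equiv.symm_apply_apply f x

namespace Stmt19Aux

open Finset

variable {ι : Type*} [Fintype ι] [DecidableEq ι] {d : ℕ}

def Phi (hd : 0 < d) (S : Finset ι) : Finset (ι → Fin d) :=
  Finset.univ.filter (fun f => ∀ a ∉ S, f a = ⟨0, hd⟩)

noncomputable def V (hd : 0 < d) (σ : Matrix (Fin d) (Fin d) ℂ) (S : Finset ι)
    (μ : Equiv.Perm ι) (p : ι → ℕ) : ℂ :=
  ∑ f ∈ Phi hd S, ∏ a ∈ S, (σ ^ p a) (f (μ a)) (f a)

lemma mem_Phi {hd : 0 < d} {S : Finset ι} {f : ι → Fin d} :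
    f ∈ Phi hd S ↔ ∀ a ∉ S, f a = ⟨0, hd⟩ := by
  simp [Phi]

lemma sum_Phi_erase (hd : 0 < d) (S : Finset ι) (x : ι) (hx : x ∈ S)
    (G : (ι → Fin d) → ℂ) :
    ∑ f ∈ Phi hd S, G f
      = ∑ f ∈ Phi hd (S.erase x), ∑ v : Fin d, G (Function.update f x v) := by
  rw [← Finset.sum_product']
  refine Finset.sum_nbij' (s := Phi hd S) (t := Phi hd (S.erase x) ×ˢ Finset.univ)
    (f := G) (g := fun fv => G (Function.update fv.1 x fv.2))
    (fun g => (Function.update g x (⟨0, hd⟩ : Fin d), g x))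
    (fun fv => Function.update fv.1 x fv.2) ?_ ?_ ?_ ?_ ?_
  · intro g hg
    rw [mem_Phi] at hg
    simp only [Finset.mem_product, Finset.mem_univ, and_true]
    rw [mem_Phi]
    intro a ha
    rcases eq_or_ne a x with rfl | hne
    · simp
    · rw [Function.update_of_ne hne]
      exact hg a (fun h => ha (Finset.mem_erase.2 ⟨hne, h⟩))
  · intro fv hfv
    simp only [Finset.mem_product] at hfv
    rw [mem_Phi] at hfv
    rw [mem_Phi]
    intro a ha
    have hne : a ≠ x := fun h => ha (h ▸ hx)
    show Function.update fv.1 x fv.2 a = ⟨0, hd⟩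
    rw [Function.update_of_ne hne]
    exact hfv.1 a (fun h => ha (Finset.mem_of_mem_erase h))
  · intro g hg
    rw [mem_Phi] at hg
    show Function.update (Function.update g x (⟨0, hd⟩ : Fin d)) x (g x) = g
    rw [Function.update_idem]
    exact Function.update_eq_self x g
  · intro fv hfv
    simp only [Finset.mem_product] at hfv
    rw [mem_Phi] at hfv
    show (Function.update (Function.update fv.1 x fv.2) x (⟨0, hd⟩ : Fin d),
        Function.update fv.1 x fv.2 x) = fv
    rw [Function.update_idem, Function.update_self]
    have h2 : Function.update fv.1 x (⟨0, hd⟩ : Fin d) = fv.1 := by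
      conv_rhs => rw [← Function.update_eq_self x fv.1]
      rw [hfv.1 x (Finset.notMem_erase x S)]
    rw [h2]
  · intro g hg
    show G g = G (Function.update (Function.update g x (⟨0, hd⟩ : Fin d)) x (g x))
    rw [Function.update_idem]
    rw [Function.update_eq_self x g]

lemma step_fixed (hd : 0 < d) (σ : Matrix (Fin d) (Fin d) ℂ) (S : Finset ι) (x : ι)
    (hx : x ∈ S) (μ : Equiv.Perm ι) (p : ι → ℕ) (hfix : μ x = x) :
    V hd σ S μ p = (σ ^ p x).trace * V hd σ (S.erase x) μ p := by
  unfold V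
  rw [sum_Phi_erase hd S x hx, Finset.mul_sum]
  refine Finset.sum_congr rfl (fun f hf => ?_)
  have key : ∀ v : Fin d,
      ∏ a ∈ S, (σ ^ p a) (Function.update f x v (μ a)) (Function.update f x v a)
      = (σ ^ p x) v v * ∏ a ∈ S.erase x, (σ ^ p a) (f (μ a)) (f a) := by
    intro v
    rw [← Finset.mul_prod_erase S _ hx]
    congr 1
    · rw [hfix, Function.update_self]
    · refine Finset.prod_congr rfl (fun a ha => ?_)
      have ha' : a ≠ x := Finset.ne_of_mem_erase ha
      have hμa : μ a ≠ x := fun h => ha' (μ.injective (h.trans hfix.symm))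
      rw [Function.update_of_ne hμa, Function.update_of_ne ha']
  simp only [key]
  rw [← Finset.sum_mul]
  simp [Matrix.trace, Matrix.diag]

lemma step_contract (hd : 0 < d) (σ : Matrix (Fin d) (Fin d) ℂ) (S : Finset ι) (x : ι)
    (hx : x ∈ S) (μ : Equiv.Perm ι) (p : ι → ℕ) (hw : μ⁻¹ x ∈ S) (hfix : μ x ≠ x) :
    V hd σ S μ p = V hd σ (S.erase x) (μ * Equiv.swap x (μ⁻¹ x))
      (Function.update p (μ⁻¹ x) (p x + p (μ⁻¹ x))) := by
  have hwx : μ⁻¹ x ≠ x := by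
    intro h
    exact hfix (by conv_lhs => rw [← h, Equiv.Perm.apply_inv_self])
  have hμw : μ (μ⁻¹ x) = x := Equiv.Perm.apply_inv_self μ x
  have hwS : μ⁻¹ x ∈ S.erase x := Finset.mem_erase.2 ⟨hwx, hw⟩
  unfold V
  rw [sum_Phi_erase hd S x hx]
  refine Finset.sum_congr rfl (fun f hf => ?_)
  have key : ∀ v : Fin d,
      ∏ a ∈ S, (σ ^ p a) (Function.update f x v (μ a)) (Function.update f x v a)
      = ((σ ^ p x) (f (μ x)) v * (σ ^ p (μ⁻¹ x)) v (f (μ⁻¹ x)))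
        * ∏ a ∈ (S.erase x).erase (μ⁻¹ x), (σ ^ p a) (f (μ a)) (f a) := by
    intro v
    rw [← Finset.mul_prod_erase S _ hx, ← Finset.mul_prod_erase _ _ hwS, ← mul_assoc]
    congr 1
    congr 1
    · rw [Function.update_self, Function.update_of_ne hfix]
    · rw [hμw, Function.update_self, Function.update_of_ne hwx]
    · refine Finset.prod_congr rfl (fun a ha => ?_)
      have ha1 : a ≠ μ⁻¹ x := Finset.ne_of_mem_erase ha
      have ha2 : a ≠ x := Finset.ne_of_mem_erase (Finset.mem_of_mem_erase ha)
      have hμa : μ a ≠ x := by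
        intro h
        exact ha1 (by rw [← h, Equiv.Perm.inv_apply_self])
      rw [Function.update_of_ne hμa, Function.update_of_ne ha2]
  simp only [key]
  rw [← Finset.sum_mul, ← Finset.mul_prod_erase _ _ hwS]
  congr 1
  · have hsw : (μ * Equiv.swap x (μ⁻¹ x)) (μ⁻¹ x) = μ x := by
      rw [Equiv.Perm.mul_apply, Equiv.swap_apply_right]
    rw [← Matrix.mul_apply, ← pow_add, Function.update_self, hsw]
  · refine Finset.prod_congr rfl (fun a ha => ?_)
    have ha1 : a ≠ μ⁻¹ x := Finset.ne_of_mem_erase ha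
    have ha2 : a ≠ x := Finset.ne_of_mem_erase (Finset.mem_of_mem_erase ha)
    have hsw : (μ * Equiv.swap x (μ⁻¹ x)) a = μ a := by
      rw [Equiv.Perm.mul_apply, Equiv.swap_apply_of_ne_of_ne ha2 ha1]
    rw [Function.update_of_ne ha1, hsw]

lemma erase_inter_eq (S W : Finset ι) (x : ι) :
    (S.erase x) ∩ W = (S ∩ W).erase x := by
  ext a
  simp only [Finset.mem_inter, Finset.mem_erase]
  tauto

lemma factor (hd : 0 < d) (σ : Matrix (Fin d) (Fin d) ℂ) (S : Finset ι) :
    ∀ (μ : Equiv.Perm ι), (∀ a ∈ S, μ a ∈ S) → ∀ (p : ι → ℕ),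
    ∃ L : Multiset (Finset ι × ℕ),
      (∀ B ∈ L, (Prod.fst B).Nonempty) ∧
      (∀ B ∈ L, (Prod.fst B) ⊆ S) ∧
      (∀ B ∈ L, ∀ a ∈ (Prod.fst B), μ a ∈ (Prod.fst B)) ∧
      (∀ W : Finset ι,
        (L.map (fun B => ((Prod.fst B) ∩ W).card)).sum ≤ (S ∩ W).card) ∧
      (∀ a ∈ S, ∃ B ∈ L, a ∈ (Prod.fst B)) ∧
      (L.map Prod.snd).sum = (∑ a ∈ S, p a) ∧
      V hd σ S μ p = (L.map (fun B => (σ ^ (Prod.snd B)).trace)).prod := by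
  induction S using Finset.strongInduction with
  | _ S IH =>
  intro μ hcl p
  rcases S.eq_empty_or_nonempty with rfl | ⟨x, hx⟩
  · refine ⟨0, by simp, by simp, by simp, by simp, by simp, by simp, ?_⟩
    have hPhi : Phi (ι := ι) hd ∅ = {fun _ => (⟨0, hd⟩ : Fin d)} := by
      ext f
      rw [mem_Phi, Finset.mem_singleton]
      constructor
      · intro h; funext a; exact h a (Finset.notMem_empty a)
      · intro h a _; rw [h]
    simp [V, hPhi]
  · -- S nonempty, x ∈ S
    by_cases hfix : μ x = x
    · -- fixed point case
      have hcl' : ∀ a ∈ S.erase x, μ a ∈ S.erase x := by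
        intro a ha
        have ha1 : a ≠ x := Finset.ne_of_mem_erase ha
        refine Finset.mem_erase.2 ⟨?_, hcl a (Finset.mem_of_mem_erase ha)⟩
        intro h; exact ha1 (μ.injective (h.trans hfix.symm))
      obtain ⟨L', h1, h2, h3, h4, h5, h6, h7⟩ :=
        IH (S.erase x) (Finset.erase_ssubset hx) μ hcl' p
      refine ⟨({x}, p x) ::ₘ L', ?_, ?_, ?_, ?_, ?_, ?_, ?_⟩
      · intro B hB
        rcases Multiset.mem_cons.1 hB with rfl | hB
        · exact Finset.singleton_nonempty x
        · exact h1 B hB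
      · intro B hB
        rcases Multiset.mem_cons.1 hB with rfl | hB
        · simpa using hx
        · exact (h2 B hB).trans (Finset.erase_subset x S)
      · intro B hB
        rcases Multiset.mem_cons.1 hB with rfl | hB
        · intro a ha
          rw [Finset.mem_singleton] at ha
          subst ha
          simpa [hfix] using Finset.mem_singleton_self a
        · exact h3 B hB
      · intro W
        rw [Multiset.map_cons, Multiset.sum_cons]
        dsimp only
        have hkey : (({x} : Finset ι) ∩ W).card + ((S.erase x) ∩ W).card
            = (S ∩ W).card := by
          rw [erase_inter_eq]
          by_cases hxW : x ∈ W
          · rw [Finset.singleton_inter_of_mem hxW, Finset.card_singleton,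
              Finset.card_erase_of_mem (Finset.mem_inter.2 ⟨hx, hxW⟩)]
            have : 1 ≤ (S ∩ W).card :=
              Finset.card_pos.2 ⟨x, Finset.mem_inter.2 ⟨hx, hxW⟩⟩
            omega
          · rw [Finset.singleton_inter_of_notMem hxW, Finset.card_empty,
              Finset.erase_eq_of_notMem
                (fun h => hxW (Finset.mem_inter.1 h).2)]
            omega
        have := h4 W
        omega
      · intro a ha
        rcases eq_or_ne a x with rfl | hne
        · exact ⟨({a}, p a), Multiset.mem_cons_self _ _, Finset.mem_singleton_self a⟩
        · obtain ⟨B, hB, haB⟩ := h5 a (Finset.mem_erase.2 ⟨hne, ha⟩)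
          exact ⟨B, Multiset.mem_cons_of_mem hB, haB⟩
      · rw [Multiset.map_cons, Multiset.sum_cons, h6]
        exact Finset.add_sum_erase S p hx
      · rw [Multiset.map_cons, Multiset.prod_cons, ← h7]
        exact step_fixed hd σ S x hx μ p hfix
    · -- moving point case
      have himg : S.image μ = S := by
        apply Finset.eq_of_subset_of_card_le
        · intro b hb
          obtain ⟨a, ha, rfl⟩ := Finset.mem_image.1 hb
          exact hcl a ha
        · rw [Finset.card_image_of_injective S μ.injective]
      have hw : μ⁻¹ x ∈ S := by
        have : x ∈ S.image μ := himg.symm ▸ hx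
        obtain ⟨a, ha, hax⟩ := Finset.mem_image.1 this
        rwa [← hax, Equiv.Perm.inv_apply_self]
      have hwx : μ⁻¹ x ≠ x := by
        intro h
        exact hfix (by conv_lhs => rw [← h, Equiv.Perm.apply_inv_self])
      have hwS : μ⁻¹ x ∈ S.erase x := Finset.mem_erase.2 ⟨hwx, hw⟩
      set w := μ⁻¹ x with hwdef
      set μ' := μ * Equiv.swap x w with hμ'def
      set p' := Function.update p w (p x + p w) with hp'def
      have hμ'w : μ' w = μ x := by
        rw [hμ'def, Equiv.Perm.mul_apply, Equiv.swap_apply_right]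
      have hμ'other : ∀ a, a ≠ x → a ≠ w → μ' a = μ a := by
        intro a ha1 ha2
        rw [hμ'def, Equiv.Perm.mul_apply, Equiv.swap_apply_of_ne_of_ne ha1 ha2]
      have hμw : μ w = x := Equiv.Perm.apply_inv_self μ x
      have hcl' : ∀ a ∈ S.erase x, μ' a ∈ S.erase x := by
        intro a ha
        have ha1 : a ≠ x := Finset.ne_of_mem_erase ha
        rcases eq_or_ne a w with rfl | ha2
        · rw [hμ'w]
          exact Finset.mem_erase.2 ⟨hfix, hcl x hx⟩
        · rw [hμ'other a ha1 ha2]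
          refine Finset.mem_erase.2 ⟨?_, hcl a (Finset.mem_of_mem_erase ha)⟩
          intro h
          exact ha2 (by rw [hwdef, ← h, Equiv.Perm.inv_apply_self])
      obtain ⟨L', h1, h2, h3, h4, h5, h6, h7⟩ :=
        IH (S.erase x) (Finset.erase_ssubset hx) μ' hcl' p'
      obtain ⟨B', hB', hwB'⟩ := h5 w hwS
      have hcons : B' ::ₘ L'.erase B' = L' := Multiset.cons_erase hB'
      have hother : ∀ B ∈ L'.erase B', w ∉ B.1 := by
        intro B hB hwB
        have h4w := h4 {w}
        rw [← hcons, Multiset.map_cons, Multiset.sum_cons] at h4w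
        have hc1 : (B'.1 ∩ {w}).card = 1 := by
          rw [Finset.inter_comm, Finset.singleton_inter_of_mem hwB', Finset.card_singleton]
        have hc2 : 1 ≤ (((L'.erase B').map (fun B => ((Prod.fst B) ∩ {w}).card))).sum := by
          have : (B.1 ∩ {w}).card = 1 := by
            rw [Finset.inter_comm, Finset.singleton_inter_of_mem hwB, Finset.card_singleton]
          have hmem := Multiset.mem_map_of_mem
            (fun B => ((Prod.fst B) ∩ ({w} : Finset ι)).card) hB
          calc 1 = (B.1 ∩ {w}).card := this.symm
          _ ≤ _ := Multiset.single_le_sum (fun y _ => Nat.zero_le y) _ hmem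
        have hc3 : ((S.erase x) ∩ {w}).card ≤ 1 := by
          rw [Finset.inter_comm]
          exact (Finset.card_le_card (Finset.inter_subset_left)).trans (by simp)
        omega
      refine ⟨(insert x B'.1, B'.2) ::ₘ L'.erase B', ?_, ?_, ?_, ?_, ?_, ?_, ?_⟩
      · intro B hB
        rcases Multiset.mem_cons.1 hB with rfl | hB
        · exact Finset.insert_nonempty _ _
        · exact h1 B (Multiset.mem_of_mem_erase hB)
      · intro B hB
        rcases Multiset.mem_cons.1 hB with rfl | hB
        · show insert x B'.1 ⊆ S
          intro a ha
          rcases Finset.mem_insert.1 ha with rfl | ha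
          · exact hx
          · exact Finset.mem_of_mem_erase (h2 B' hB' ha)
        · exact (h2 B (Multiset.mem_of_mem_erase hB)).trans (Finset.erase_subset x S)
      · intro B hB
        rcases Multiset.mem_cons.1 hB with rfl | hB
        · show ∀ a ∈ insert x B'.1, μ a ∈ insert x B'.1
          intro a ha
          rcases Finset.mem_insert.1 ha with rfl | ha
          · refine Finset.mem_insert_of_mem ?_
            have := h3 B' hB' w hwB'
            rwa [hμ'w] at this
          · rcases eq_or_ne a w with rfl | haw
            · rw [hμw]; exact Finset.mem_insert_self x _
            · have hax : a ≠ x := Finset.ne_of_mem_erase (h2 B' hB' ha)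
              refine Finset.mem_insert_of_mem ?_
              have := h3 B' hB' a ha
              rwa [hμ'other a hax haw] at this
        · intro a ha
          have hBL' : B ∈ L' := Multiset.mem_of_mem_erase hB
          have hax : a ≠ x := Finset.ne_of_mem_erase (h2 B hBL' ha)
          have haw : a ≠ w := fun h => hother B hB (h ▸ ha)
          have := h3 B hBL' a ha
          rwa [hμ'other a hax haw] at this
      · intro W
        rw [Multiset.map_cons, Multiset.sum_cons]
        dsimp only
        have h4W := h4 W
        rw [← hcons, Multiset.map_cons, Multiset.sum_cons] at h4W
        by_cases hxW : x ∈ W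
        · have hA : ((insert x B'.1) ∩ W).card ≤ (B'.1 ∩ W).card + 1 := by
            have hsub : (insert x B'.1) ∩ W ⊆ insert x (B'.1 ∩ W) := by
              intro a ha
              rcases Finset.mem_inter.1 ha with ⟨ha1, ha2⟩
              rcases Finset.mem_insert.1 ha1 with rfl | ha1
              · exact Finset.mem_insert_self _ _
              · exact Finset.mem_insert_of_mem (Finset.mem_inter.2 ⟨ha1, ha2⟩)
            exact (Finset.card_le_card hsub).trans (Finset.card_insert_le _ _)
          have hB : ((S.erase x) ∩ W).card + 1 = (S ∩ W).card := by
            rw [erase_inter_eq, Finset.card_erase_of_mem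
              (Finset.mem_inter.2 ⟨hx, hxW⟩)]
            have : 1 ≤ (S ∩ W).card :=
              Finset.card_pos.2 ⟨x, Finset.mem_inter.2 ⟨hx, hxW⟩⟩
            omega
          omega
        · have hA : ((insert x B'.1) ∩ W).card = (B'.1 ∩ W).card := by
            congr 1
            ext a
            simp only [Finset.mem_inter, Finset.mem_insert]
            constructor
            · rintro ⟨rfl | ha, haW⟩
              · exact absurd haW hxW
              · exact ⟨ha, haW⟩
            · rintro ⟨ha, haW⟩; exact ⟨Or.inr ha, haW⟩
          have hB : ((S.erase x) ∩ W).card = (S ∩ W).card := by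
            rw [erase_inter_eq, Finset.erase_eq_of_notMem
              (fun h => hxW (Finset.mem_inter.1 h).2)]
          omega
      · intro a ha
        rcases eq_or_ne a x with rfl | hax
        · exact ⟨_, Multiset.mem_cons_self _ _, Finset.mem_insert_self a _⟩
        · obtain ⟨B, hB, haB⟩ := h5 a (Finset.mem_erase.2 ⟨hax, ha⟩)
          by_cases haB' : a ∈ B'.1
          · exact ⟨_, Multiset.mem_cons_self _ _, Finset.mem_insert_of_mem haB'⟩
          · have hne : B ≠ B' := fun h => haB' (h ▸ haB)
            exact ⟨B, Multiset.mem_cons_of_mem ((Multiset.mem_erase_of_ne hne).2 hB), haB⟩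
      · rw [Multiset.map_cons, Multiset.sum_cons]
        have h6' := h6
        rw [← hcons, Multiset.map_cons, Multiset.sum_cons] at h6'
        have hsum : ∑ a ∈ S.erase x, p' a = p x + ∑ a ∈ S.erase x, p a := by
          rw [hp'def, Finset.sum_update_of_mem hwS, Finset.sdiff_singleton_eq_erase,
            ← Finset.add_sum_erase _ p hwS]
          ring
        have hS : ∑ a ∈ S, p a = p x + ∑ a ∈ S.erase x, p a :=
          (Finset.add_sum_erase S p hx).symm
        show B'.2 + ((L'.erase B').map Prod.snd).sum = ∑ a ∈ S, p a
        omega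
      · rw [Multiset.map_cons, Multiset.prod_cons]
        have h7' := h7
        rw [← hcons, Multiset.map_cons, Multiset.prod_cons] at h7'
        rw [step_contract hd σ S x hx μ p hw hfix, ← hwdef, ← hμ'def, ← hp'def, h7']

lemma trace_eq (hd : 0 < d) (σ : Matrix (Fin d) (Fin d) ℂ) {n : ℕ}
    (μ : Equiv.Perm (Fin n)) (p : Fin n → ℕ) :
    (permMatrix d n μ * tensorPow (fun a => σ ^ p a)).trace
      = V hd σ Finset.univ μ p := by
  have hPhi : Phi (ι := Fin n) hd Finset.univ = Finset.univ := by
    ext f; simp [mem_Phi]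
  unfold V permMatrix tensorPow
  rw [hPhi, Matrix.trace]
  simp only [Matrix.diag, Matrix.mul_apply, Matrix.of_apply]
  refine Finset.sum_congr rfl (fun f _ => ?_)
  rw [Finset.sum_eq_single (fun b => f (μ b))]
  · rw [if_pos, one_mul]
    intro a
    show f a = f (μ (μ⁻¹ a))
    rw [Equiv.Perm.apply_inv_self]
  · intro g _ hne
    rw [if_neg, zero_mul]
    intro h
    apply hne
    funext b
    rw [h (μ b), Equiv.Perm.inv_apply_self]
  · intro h
    exact absurd (Finset.mem_univ _) h

lemma trace_pow_eq {σ : Matrix (Fin d) (Fin d) ℂ} (hσ : σ.PosSemidef) (q : ℕ) :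
    (σ ^ q).trace = ((∑ i, (hσ.1.eigenvalues i) ^ q : ℝ) : ℂ) := by
  set U : Matrix (Fin d) (Fin d) ℂ := (Matrix.IsHermitian.eigenvectorUnitary hσ.1 : Matrix (Fin d) (Fin d) ℂ) with hU
  set D : Matrix (Fin d) (Fin d) ℂ :=
    Matrix.diagonal (RCLike.ofReal ∘ hσ.1.eigenvalues) with hD
  have hUU : U * star U = 1 :=
    (Matrix.mem_unitaryGroup_iff).mp (Matrix.IsHermitian.eigenvectorUnitary hσ.1).2
  have hU'U : star U * U = 1 :=
    (Matrix.mem_unitaryGroup_iff').mp (Matrix.IsHermitian.eigenvectorUnitary hσ.1).2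
  have hspec : σ = U * D * star U := Matrix.IsHermitian.spectral_theorem hσ.1
  have hpow : σ ^ q = U * D ^ q * star U := by
    induction q with
    | zero => rw [pow_zero, pow_zero, mul_one, hUU]
    | succ q ih =>
        rw [pow_succ, ih]
        conv_lhs => rw [hspec]
        calc U * D ^ q * star U * (U * D * star U)
            = U * (D ^ q * ((star U * U) * (D * star U))) := by
              simp only [mul_assoc]
          _ = U * (D ^ q * (D * star U)) := by rw [hU'U, one_mul]
          _ = U * D ^ (q + 1) * star U := by rw [pow_succ]; simp only [mul_assoc]
  rw [hpow, Matrix.trace_mul_cycle, hU'U, one_mul, hD,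
    Matrix.diagonal_pow, Matrix.trace_diagonal]
  push_cast
  rfl

lemma cheb {lam : Fin d → ℝ} (hlam : ∀ i, 0 ≤ lam i) (a b : ℕ) :
    (∑ i, lam i ^ a) * (∑ i, lam i ^ b) ≤ (d : ℝ) * ∑ i, lam i ^ (a + b) := by
  have hmono : MonovaryOn (fun i => lam i ^ a) (fun i => lam i ^ b)
      (Finset.univ : Finset (Fin d)) := by
    intro i _ j _ hlt
    have hij : lam i ≤ lam j := by
      by_contra hc
      push_neg at hc
      exact absurd (pow_le_pow_left₀ (hlam j) hc.le b) (not_le.2 hlt)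
    exact pow_le_pow_left₀ (hlam i) hij a
  have := hmono.sum_mul_sum_le_card_mul_sum
  simpa [pow_add, Finset.card_univ] using this

lemma prod_le_pow_mul (lam : Fin d → ℝ) (hlam : ∀ i, 0 ≤ lam i) (Q : Multiset ℕ)
    (hQ : Q ≠ 0) :
    (Q.map (fun q => ∑ i, lam i ^ q)).prod
      ≤ (d : ℝ) ^ (Multiset.card Q - 1) * ∑ i, lam i ^ Q.sum := by
  have hnn : ∀ q : ℕ, 0 ≤ ∑ i, lam i ^ q := fun q =>
    Finset.sum_nonneg (fun i _ => pow_nonneg (hlam i) q)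
  revert hQ
  induction Q using Multiset.induction_on with
  | empty => exact fun hQ => absurd rfl hQ
  | cons a s ih =>
      intro hQ
      rcases eq_or_ne s 0 with rfl | hs
      · simp
      · have hcard : 1 ≤ Multiset.card s := by
          exact Multiset.card_pos.2 hs
        rw [Multiset.map_cons, Multiset.prod_cons, Multiset.sum_cons]
        calc (∑ i, lam i ^ a) * (s.map (fun q => ∑ i, lam i ^ q)).prod
            ≤ (∑ i, lam i ^ a) * ((d : ℝ) ^ (Multiset.card s - 1) * ∑ i, lam i ^ s.sum) :=
              mul_le_mul_of_nonneg_left (ih hs) (hnn a)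
          _ = (d : ℝ) ^ (Multiset.card s - 1) * ((∑ i, lam i ^ a) * ∑ i, lam i ^ s.sum) := by
              ring
          _ ≤ (d : ℝ) ^ (Multiset.card s - 1) * ((d : ℝ) * ∑ i, lam i ^ (a + s.sum)) :=
              mul_le_mul_of_nonneg_left (cheb hlam a s.sum)
                (pow_nonneg (Nat.cast_nonneg d) _)
          _ = (d : ℝ) ^ (Multiset.card s - 1 + 1) * ∑ i, lam i ^ (a + s.sum) := by
              rw [pow_succ]; ring
          _ = (d : ℝ) ^ (Multiset.card (a ::ₘ s) - 1) * ∑ i, lam i ^ (a + s.sum) := by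
              rw [Multiset.card_cons]
              congr 2
              omega

lemma card_filter_lt (n c : ℕ) (hc : c ≤ n) :
    (Finset.univ.filter (fun a : Fin n => a.val < c)).card = c := by
  induction c with
  | zero => simp
  | succ c ih =>
      have hc' : c ≤ n := by omega
      have : Finset.univ.filter (fun a : Fin n => a.val < c + 1)
          = insert (⟨c, hc⟩ : Fin n) (Finset.univ.filter (fun a : Fin n => a.val < c)) := by
        ext a
        simp only [Finset.mem_filter, Finset.mem_univ, true_and, Finset.mem_insert, Fin.ext_iff]
        omega
      rw [this, Finset.card_insert_of_notMem (by simp), ih hc']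

section Comb

variable {k : ℕ}

def pr {k : ℕ} (x : Fin (2 * k)) : Fin k := ⟨x.val / 2, by have := x.isLt; omega⟩

lemma swapAt_apply_val (m : Fin k) (x : Fin (2 * k)) :
    ((swapAt k m) x).val =
      if x.val = 2 * m.val then 2 * m.val + 1
      else if x.val = 2 * m.val + 1 then 2 * m.val else x.val := by
  unfold swapAt
  rw [Equiv.swap_apply_def]
  simp only [Fin.ext_iff, apply_ite Fin.val]

lemma pr_swapAt (m : Fin k) (x : Fin (2 * k)) : pr ((swapAt k m) x) = pr x := by
  have h := swapAt_apply_val m x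
  apply Fin.ext
  show ((swapAt k m) x).val / 2 = x.val / 2
  rw [h]
  split_ifs <;> omega

lemma swapAt_apply_of_pr_ne (m : Fin k) (x : Fin (2 * k)) (h : pr x ≠ m) :
    (swapAt k m) x = x := by
  have hval : x.val / 2 ≠ m.val := fun hh => h (Fin.ext hh)
  apply Fin.ext
  rw [swapAt_apply_val]
  split_ifs <;> omega

lemma swapAt_pr_val (x : Fin (2 * k)) :
    ((swapAt k (pr x)) x).val = if x.val % 2 = 0 then x.val + 1 else x.val - 1 := by
  rw [swapAt_apply_val]
  have hpr : (pr x).val = x.val / 2 := rfl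
  split_ifs <;> omega

lemma noncommProd_swapAt_apply :
    ∀ (T : Finset (Fin k))
      (h : (T : Set (Fin k)).Pairwise fun a b => Commute (swapAt k a) (swapAt k b))
      (x : Fin (2 * k)),
    (T.noncommProd (swapAt k) h) x = if pr x ∈ T then (swapAt k (pr x)) x else x := by
  intro T
  induction T using Finset.induction_on with
  | empty => intro h x; simp
  | @insert a t hat ih =>
      intro h x
      rw [Finset.noncommProd_insert_of_notMem t a (swapAt k) h hat,
        Equiv.Perm.mul_apply, ih]
      by_cases hpt : pr x ∈ t
      · have hne : pr x ≠ a := fun hh => hat (hh ▸ hpt)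
        rw [if_pos hpt, if_pos (Finset.mem_insert_of_mem hpt)]
        exact swapAt_apply_of_pr_ne a _ (by rw [pr_swapAt]; exact hne)
      · rw [if_neg hpt]
        by_cases hax : pr x = a
        · rw [if_pos (Finset.mem_insert.2 (Or.inl hax)), hax]
        · rw [if_neg (by simp [hax, hpt]), swapAt_apply_of_pr_ne a x hax]

end Comb

lemma part1 (k j : ℕ) (hk : 1 ≤ k) (hj : j ≤ k - 1)
    (τ τ' : Equiv.Perm (Fin (2 * k)))
    (hτ : τ.IsCycleOn {x : Fin (2 * k) | (x : ℕ) % 2 = 0})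
    (hτfix : ∀ x : Fin (2 * k), (x : ℕ) % 2 = 1 → τ x = x)
    (hτ' : τ'.IsCycleOn {x : Fin (2 * k) | (x : ℕ) % 2 = 1})
    (hτ'fix : ∀ x : Fin (2 * k), (x : ℕ) % 2 = 0 → τ' x = x)
    (T : Finset (Fin k)) (hT : T.Nonempty) (hTsub : ∀ m ∈ T, (m : ℕ) < k - j)
    (hcomm : (T : Set (Fin k)).Pairwise fun a b => Commute (swapAt k a) (swapAt k b))
    (μ : Equiv.Perm (Fin (2 * k)))
    (hμ : μ = (τ * τ')⁻¹ * Finset.noncommProd T (swapAt k) hcomm)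
    (x : Fin (2 * k)) :
    ∃ a b : ℕ, (μ ^ a) x ≠ (μ ^ b) x ∧ (((μ ^ a) x : Fin (2 * k)) : ℕ) < 2 * (k - j) ∧
      (((μ ^ b) x : Fin (2 * k)) : ℕ) < 2 * (k - j) := by
  classical
  have h_tt : ∀ y : Fin (2 * k), (((τ * τ') y : Fin (2 * k)) : ℕ) % 2 = (y : ℕ) % 2 := by
    intro y
    rcases Nat.mod_two_eq_zero_or_one (y : ℕ) with h | h
    · have h2 : (τ * τ') y = τ y := by rw [Equiv.Perm.mul_apply, hτ'fix y h]
      have h3 : τ y ∈ {x : Fin (2 * k) | (x : ℕ) % 2 = 0} :=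
        hτ.1.mapsTo (show y ∈ _ from h)
      rw [h2]
      exact (show ((τ y : Fin (2 * k)) : ℕ) % 2 = 0 from h3).trans h.symm
    · have h3 : τ' y ∈ {x : Fin (2 * k) | (x : ℕ) % 2 = 1} :=
        hτ'.1.mapsTo (show y ∈ _ from h)
      have h2 : (τ * τ') y = τ' y := by
        rw [Equiv.Perm.mul_apply, hτfix _ (show ((τ' y : Fin (2 * k)) : ℕ) % 2 = 1 from h3)]
      rw [h2]
      exact (show ((τ' y : Fin (2 * k)) : ℕ) % 2 = 1 from h3).trans h.symm
  have h_tt_inv : ∀ y : Fin (2 * k), ((((τ * τ')⁻¹) y : Fin (2 * k)) : ℕ) % 2 = (y : ℕ) % 2 := by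
    intro y
    have := h_tt (((τ * τ')⁻¹) y)
    rw [Equiv.Perm.apply_inv_self] at this
    exact this.symm
  have hμapp : ∀ y, μ y = (τ * τ')⁻¹ ((Finset.noncommProd T (swapAt k) hcomm) y) := by
    intro y; rw [hμ]; rfl
  have hsapp := noncommProd_swapAt_apply T hcomm
  have hpar : ∀ y : Fin (2 * k), ((μ y : Fin (2 * k)) : ℕ) % 2
      = if pr y ∈ T then 1 - (y : ℕ) % 2 else (y : ℕ) % 2 := by
    intro y
    rw [hμapp, h_tt_inv, hsapp]
    split_ifs with h
    · have h2 := swapAt_pr_val y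
      have h3 := Nat.mod_two_eq_zero_or_one (y : ℕ)
      split_ifs at h2 <;> omega
    · rfl
  have hnofix : ∀ y : Fin (2 * k), pr y ∉ T → μ y = (τ * τ')⁻¹ y := by
    intro y h; rw [hμapp, hsapp, if_neg h]
  have hsc : ∀ n : ℕ, μ.SameCycle x ((μ ^ n) x) := fun n => ⟨(n : ℤ), by rw [zpow_natCast]⟩
  have hexists : ∃ y, μ.SameCycle x y ∧ pr y ∈ T := by
    by_contra hcon
    push_neg at hcon
    have hpow : ∀ n : ℕ, (μ ^ n) x = (((τ * τ')⁻¹) ^ n) x := by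
      intro n
      induction n with
      | zero => rfl
      | succ n ih =>
          rw [pow_succ', Equiv.Perm.mul_apply, ih]
          have hy : μ.SameCycle x ((((τ * τ')⁻¹) ^ n) x) := ih ▸ hsc n
          rw [hnofix _ (hcon _ hy)]
          rw [pow_succ', Equiv.Perm.mul_apply]
    obtain ⟨m₀, hm₀⟩ := hT
    have hm₀k : (m₀ : ℕ) < k := m₀.isLt
    rcases Nat.mod_two_eq_zero_or_one (x : ℕ) with hxp | hxp
    · set t₀ : Fin (2 * k) := ⟨2 * m₀.val, by omega⟩ with ht₀
      have ht₀e : (t₀ : ℕ) % 2 = 0 := by show (2 * m₀.val) % 2 = 0; omega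
      have hsc_τ : τ.SameCycle x t₀ := hτ.2 (show x ∈ _ from hxp) (show t₀ ∈ _ from ht₀e)
      obtain ⟨i, _, hi⟩ := hsc_τ.exists_pow_eq'
      have heven : ∀ n : ℕ, (((τ ^ n) x : Fin (2 * k)) : ℕ) % 2 = 0
          ∧ ((τ * τ') ^ n) x = (τ ^ n) x := by
        intro n
        induction n with
        | zero => exact ⟨hxp, rfl⟩
        | succ n ih =>
            constructor
            · rw [pow_succ', Equiv.Perm.mul_apply]
              exact hτ.1.mapsTo (show (τ ^ n) x ∈ _ from ih.1)
            · rw [pow_succ', Equiv.Perm.mul_apply, ih.2, pow_succ',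
                Equiv.Perm.mul_apply, Equiv.Perm.mul_apply, hτ'fix _ ih.1]
      have hit : ((τ * τ') ^ i) x = t₀ := by rw [(heven i).2, hi]
      have hopos : 0 < orderOf (τ * τ') := orderOf_pos _
      have hkey : ((τ * τ') ^ (orderOf (τ * τ') * (i + 1) - i)) * ((τ * τ') ^ i) = 1 := by
        rw [← pow_add]
        have hni : orderOf (τ * τ') * (i + 1) - i + i = orderOf (τ * τ') * (i + 1) := by
          have : i + 1 ≤ orderOf (τ * τ') * (i + 1) := Nat.le_mul_of_pos_left _ hopos
          omega
        rw [hni, pow_mul, pow_orderOf_eq_one, one_pow]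
      have hinv : (((τ * τ')⁻¹) ^ (orderOf (τ * τ') * (i + 1) - i)) x = t₀ := by
        rw [inv_pow, inv_eq_of_mul_eq_one_right hkey, hit]
      have hprt₀ : pr t₀ ∈ T := by
        have : pr t₀ = m₀ := Fin.ext (show (2 * m₀.val) / 2 = m₀.val by omega)
        rw [this]; exact hm₀
      have hsct₀ : μ.SameCycle x t₀ := by
        have h := hsc (orderOf (τ * τ') * (i + 1) - i)
        rwa [hpow, hinv] at h
      exact (hcon t₀ hsct₀) hprt₀
    · set t₀ : Fin (2 * k) := ⟨2 * m₀.val + 1, by omega⟩ with ht₀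
      have ht₀e : (t₀ : ℕ) % 2 = 1 := by show (2 * m₀.val + 1) % 2 = 1; omega
      have hsc_τ : τ'.SameCycle x t₀ := hτ'.2 (show x ∈ _ from hxp) (show t₀ ∈ _ from ht₀e)
      obtain ⟨i, _, hi⟩ := hsc_τ.exists_pow_eq'
      have hodd : ∀ n : ℕ, (((τ' ^ n) x : Fin (2 * k)) : ℕ) % 2 = 1
          ∧ ((τ * τ') ^ n) x = (τ' ^ n) x := by
        intro n
        induction n with
        | zero => exact ⟨hxp, rfl⟩
        | succ n ih =>
            have hstep : (τ * τ') ((τ' ^ n) x) = τ' ((τ' ^ n) x) := by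
              rw [Equiv.Perm.mul_apply]
              exact hτfix _ (hτ'.1.mapsTo (show (τ' ^ n) x ∈ _ from ih.1))
            constructor
            · rw [pow_succ', Equiv.Perm.mul_apply]
              exact hτ'.1.mapsTo (show (τ' ^ n) x ∈ _ from ih.1)
            · rw [pow_succ', Equiv.Perm.mul_apply, ih.2, hstep, pow_succ',
                Equiv.Perm.mul_apply]
      have hit : ((τ * τ') ^ i) x = t₀ := by rw [(hodd i).2, hi]
      have hopos : 0 < orderOf (τ * τ') := orderOf_pos _
      have hkey : ((τ * τ') ^ (orderOf (τ * τ') * (i + 1) - i)) * ((τ * τ') ^ i) = 1 := by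
        rw [← pow_add]
        have hni : orderOf (τ * τ') * (i + 1) - i + i = orderOf (τ * τ') * (i + 1) := by
          have : i + 1 ≤ orderOf (τ * τ') * (i + 1) := Nat.le_mul_of_pos_left _ hopos
          omega
        rw [hni, pow_mul, pow_orderOf_eq_one, one_pow]
      have hinv : (((τ * τ')⁻¹) ^ (orderOf (τ * τ') * (i + 1) - i)) x = t₀ := by
        rw [inv_pow, inv_eq_of_mul_eq_one_right hkey, hit]
      have hprt₀ : pr t₀ ∈ T := by
        have : pr t₀ = m₀ := Fin.ext (show (2 * m₀.val + 1) / 2 = m₀.val by omega)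
        rw [this]; exact hm₀
      have hsct₀ : μ.SameCycle x t₀ := by
        have h := hsc (orderOf (τ * τ') * (i + 1) - i)
        rwa [hpow, hinv] at h
      exact (hcon t₀ hsct₀) hprt₀
  obtain ⟨y₀, hy₀c, hy₀T⟩ := hexists
  set O : Finset (Fin (2 * k)) := Finset.univ.filter (fun y => μ.SameCycle x y) with hO
  have hmemO : ∀ y, y ∈ O ↔ μ.SameCycle x y := by intro y; simp [hO]
  have hμO : ∀ y, y ∈ O → μ y ∈ O := by
    intro y hy
    rw [hmemO] at hy ⊢
    exact hy.trans ⟨1, by simp⟩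
  have hμinvO : ∀ y, y ∈ O → μ⁻¹ y ∈ O := by
    intro y hy
    rw [hmemO] at hy ⊢
    exact hy.trans ⟨-1, by simp⟩
  have hsum : ∑ y ∈ O, (((μ y : Fin (2 * k)) : ℕ) : ZMod 2)
      = ∑ y ∈ O, (((y : Fin (2 * k)) : ℕ) : ZMod 2) := by
    refine Finset.sum_nbij' (fun y => μ y) (fun y => μ⁻¹ y) hμO hμinvO ?_ ?_ ?_
    · intro y _; exact Equiv.Perm.inv_apply_self μ y
    · intro y _; exact Equiv.Perm.apply_inv_self μ y
    · intro y _; rfl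
  have hstep : ∀ y : Fin (2 * k), (((μ y : Fin (2 * k)) : ℕ) : ZMod 2)
      = (((y : Fin (2 * k)) : ℕ) : ZMod 2) + (if pr y ∈ T then 1 else 0) := by
    intro y
    have hp := hpar y
    rw [← ZMod.natCast_mod ((μ y : Fin (2 * k)) : ℕ) 2, ← ZMod.natCast_mod ((y : Fin (2 * k)) : ℕ) 2]
    have h01 := Nat.mod_two_eq_zero_or_one ((y : Fin (2 * k)) : ℕ)
    split_ifs at hp ⊢ with h
    · rcases h01 with h0 | h0 <;> rw [h0] at hp ⊢ <;> rw [hp] <;> decide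
    · rw [hp]; ring
  have hcount : (2 : ℕ) ∣ (O.filter (fun y => pr y ∈ T)).card := by
    have h1 : ∑ y ∈ O, ((if pr y ∈ T then (1 : ZMod 2) else 0)) = 0 := by
      have h2 := hsum
      rw [Finset.sum_congr rfl (fun y _ => hstep y), Finset.sum_add_distrib] at h2
      exact (left_eq_add.1 h2.symm)
    rw [Finset.sum_boole] at h1
    exact (ZMod.natCast_eq_zero_iff _ 2).1 h1
  have hy₀mem : y₀ ∈ O.filter (fun y => pr y ∈ T) :=
    Finset.mem_filter.2 ⟨(hmemO y₀).2 hy₀c, hy₀T⟩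
  have h2card : 1 < (O.filter (fun y => pr y ∈ T)).card := by
    have hpos : 0 < (O.filter (fun y => pr y ∈ T)).card :=
      Finset.card_pos.2 ⟨y₀, hy₀mem⟩
    omega
  obtain ⟨y₁, hy₁, y₂, hy₂, hne⟩ := Finset.one_lt_card.1 h2card
  have hget : ∀ y ∈ O.filter (fun y => pr y ∈ T),
      (∃ a : ℕ, (μ ^ a) x = y) ∧ ((y : Fin (2 * k)) : ℕ) < 2 * (k - j) := by
    intro y hy
    obtain ⟨hyO, hyT⟩ := Finset.mem_filter.1 hy
    constructor
    · obtain ⟨a, _, ha⟩ := ((hmemO y).1 hyO).exists_pow_eq'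
      exact ⟨a, ha⟩
    · have h1 : (pr y : ℕ) < k - j := hTsub _ hyT
      have h2 : (pr y : ℕ) = (y : ℕ) / 2 := rfl
      omega
  obtain ⟨⟨a, ha⟩, hb1⟩ := hget y₁ hy₁
  obtain ⟨⟨b, hb⟩, hb2⟩ := hget y₂ hy₂
  refine ⟨a, b, ?_, ?_, ?_⟩
  · rw [ha, hb]; exact hne
  · rw [ha]; exact hb1
  · rw [hb]; exact hb2

end Stmt19Aux

/-- Cycle-and-swap trace bound.  Let `τ ∈ S_{2k}` be a `k`-cycle on the odd positions (in
1-indexed notation; 0-indexed these have even residue) and `τ'` a `k`-cycle on the even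
positions, let `0 ≤ j ≤ k−1`, `T` a nonempty set of indices below `k−j`, and
`μ = (τ·τ')⁻¹ · ∏_{i∈T} SWAP_{2i−1,2i}`.  Then every cycle of `μ` contains at least two
elements among the first `2(k−j)` positions, and for any density matrix `σ`,
`tr(P(μ) · I^{⊗2(k−j)} ⊗ σ^{⊗2j}) ≤ d^{k−j−1} · tr(σ^{2j})`. -/
theorem stmt19 (d k j : ℕ) (hk : 1 ≤ k) (hj : j ≤ k - 1)
    (τ τ' : Equiv.Perm (Fin (2 * k)))
    (hτ : τ.IsCycleOn {x : Fin (2 * k) | (x : ℕ) % 2 = 0})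
    (hτfix : ∀ x : Fin (2 * k), (x : ℕ) % 2 = 1 → τ x = x)
    (hτ' : τ'.IsCycleOn {x : Fin (2 * k) | (x : ℕ) % 2 = 1})
    (hτ'fix : ∀ x : Fin (2 * k), (x : ℕ) % 2 = 0 → τ' x = x)
    (T : Finset (Fin k)) (hT : T.Nonempty) (hTsub : ∀ m ∈ T, (m : ℕ) < k - j)
    (hcomm : (T : Set (Fin k)).Pairwise fun a b => Commute (swapAt k a) (swapAt k b))
    (μ : Equiv.Perm (Fin (2 * k)))
    (hμ : μ = (τ * τ')⁻¹ * Finset.noncommProd T (swapAt k) hcomm)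
    (σ : Matrix (Fin d) (Fin d) ℂ) (hσ : σ.PosSemidef) (htr : σ.trace = 1) :
    (∀ x : Fin (2 * k), ∃ a b : ℕ, (μ ^ a) x ≠ (μ ^ b) x ∧
        (((μ ^ a) x : Fin (2 * k)) : ℕ) < 2 * (k - j) ∧
        (((μ ^ b) x : Fin (2 * k)) : ℕ) < 2 * (k - j)) ∧
      ((permMatrix d (2 * k) μ *
          tensorPow fun p : Fin (2 * k) =>
            if (p : ℕ) < 2 * (k - j) then (1 : Matrix (Fin d) (Fin d) ℂ) else σ).trace).re
        ≤ (d : ℝ) ^ (k - j - 1) * ((σ ^ (2 * j)).trace).re := by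

  classical
  have hd : 0 < d := by
    rcases Nat.eq_zero_or_pos d with hd0 | h
    · exfalso
      subst hd0
      have h0 : σ.trace = 0 := by
        rw [Matrix.trace, Finset.univ_eq_empty, Finset.sum_empty]
      rw [h0] at htr
      exact zero_ne_one htr
    · exact h
  have hP1 := fun x => Stmt19Aux.part1 k j hk hj τ τ' hτ hτfix hτ' hτ'fix T hT hTsub
    hcomm μ hμ x
  refine ⟨hP1, ?_⟩
  set pw : Fin (2 * k) → ℕ := fun a => if (a : ℕ) < 2 * (k - j) then 0 else 1 with hpw
  have hM : (fun p : Fin (2 * k) =>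
      if (p : ℕ) < 2 * (k - j) then (1 : Matrix (Fin d) (Fin d) ℂ) else σ)
      = fun a => σ ^ pw a := by
    funext a
    by_cases h : (a : ℕ) < 2 * (k - j)
    · simp [hpw, h]
    · simp [hpw, h]
  rw [hM, Stmt19Aux.trace_eq hd σ μ pw]
  obtain ⟨L, h1, h2, h3, h4, h5, h6, h7⟩ :=
    Stmt19Aux.factor hd σ Finset.univ μ (fun a _ => Finset.mem_univ _) pw
  set lam := hσ.1.eigenvalues with hlam
  have hlam0 : ∀ i, 0 ≤ lam i := fun i => hσ.eigenvalues_nonneg i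
  have htr_pow : ∀ q : ℕ, (σ ^ q).trace = ((∑ i, lam i ^ q : ℝ) : ℂ) := fun q =>
    Stmt19Aux.trace_pow_eq hσ q
  have hmap : L.map (fun B => (σ ^ B.2).trace)
      = (L.map (fun B => ∑ i, lam i ^ B.2)).map (fun r : ℝ => (r : ℂ)) := by
    rw [Multiset.map_map]
    exact Multiset.map_congr rfl (fun B _ => htr_pow B.2)
  have hprod : Stmt19Aux.V hd σ Finset.univ μ pw
      = (((L.map (fun B => ∑ i, lam i ^ B.2)).prod : ℝ) : ℂ) := by
    rw [h7, hmap]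
    exact (map_multiset_prod (Complex.ofRealHom) _).symm
  rw [hprod, Complex.ofReal_re, htr_pow (2 * j), Complex.ofReal_re]
  set Q := L.map Prod.snd with hQ
  have hQprod : L.map (fun B => ∑ i, lam i ^ B.2)
      = Q.map (fun q => ∑ i, lam i ^ q) := by
    rw [hQ, Multiset.map_map]
    rfl
  have hsum_pw : ∑ a : Fin (2 * k), pw a = 2 * j := by
    have h1 : ∑ a : Fin (2 * k), pw a
        = ∑ a : Fin (2 * k), (if ¬ ((a : ℕ) < 2 * (k - j)) then (1 : ℕ) else 0) := by
      refine Finset.sum_congr rfl (fun a _ => ?_)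
      rw [hpw]
      by_cases h : (a : ℕ) < 2 * (k - j) <;> simp [h]
    rw [h1, Finset.sum_boole]
    have hcards := Finset.card_filter_add_card_filter_not
      (s := (Finset.univ : Finset (Fin (2 * k)))) (p := fun a => (a : ℕ) < 2 * (k - j))
    have hclt := Stmt19Aux.card_filter_lt (2 * k) (2 * (k - j)) (by omega)
    have huniv : (Finset.univ : Finset (Fin (2 * k))).card = 2 * k := by simp
    simp only [Nat.cast_id]
    omega
  have hQsum : Q.sum = 2 * j := by rw [hQ, h6, hsum_pw]
  set W : Finset (Fin (2 * k)) := Finset.univ.filter (fun y => (y : ℕ) < 2 * (k - j))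
    with hW
  have hWcard : W.card = 2 * (k - j) :=
    Stmt19Aux.card_filter_lt (2 * k) (2 * (k - j)) (by omega)
  have hblock : ∀ B ∈ L, 2 ≤ (B.1 ∩ W).card := by
    intro B hB
    obtain ⟨x, hxB⟩ := h1 B hB
    have hpowmem : ∀ n : ℕ, (μ ^ n) x ∈ B.1 := by
      intro n
      induction n with
      | zero => exact hxB
      | succ n ih =>
          rw [pow_succ', Equiv.Perm.mul_apply]
          exact h3 B hB _ ih
    obtain ⟨a, b, hab, hav, hbv⟩ := hP1 x
    have hmem1 : (μ ^ a) x ∈ B.1 ∩ W :=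
      Finset.mem_inter.2 ⟨hpowmem a, by rw [hW]; simp [hav]⟩
    have hmem2 : (μ ^ b) x ∈ B.1 ∩ W :=
      Finset.mem_inter.2 ⟨hpowmem b, by rw [hW]; simp [hbv]⟩
    have hsub : ({(μ ^ a) x, (μ ^ b) x} : Finset (Fin (2 * k))) ⊆ B.1 ∩ W := by
      intro z hz
      rcases Finset.mem_insert.1 hz with rfl | hz
      · exact hmem1
      · rw [Finset.mem_singleton.1 hz]
        exact hmem2
    calc 2 = ({(μ ^ a) x, (μ ^ b) x} : Finset (Fin (2 * k))).card :=
        (Finset.card_pair hab).symm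
      _ ≤ _ := Finset.card_le_card hsub
  have hsum2 : Multiset.card L * 2 ≤ (L.map (fun B => (B.1 ∩ W).card)).sum := by
    have hall : ∀ y ∈ L.map (fun B => (B.1 ∩ W).card), 2 ≤ y := by
      intro y hy
      obtain ⟨B, hB, rfl⟩ := Multiset.mem_map.1 hy
      exact hblock B hB
    have := Multiset.card_nsmul_le_sum hall
    rwa [Multiset.card_map, smul_eq_mul] at this
  have hle := h4 W
  rw [Finset.univ_inter] at hle
  have hcardL : Multiset.card Q = Multiset.card L := Multiset.card_map _ _
  have hQcard : Multiset.card Q ≤ k - j := by omega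
  have hQne : Q ≠ 0 := by
    have h2k : 0 < 2 * k := by omega
    obtain ⟨B, hB, _⟩ := h5 (⟨0, h2k⟩ : Fin (2 * k)) (Finset.mem_univ _)
    intro h0
    rw [hQ, Multiset.map_eq_zero] at h0
    rw [h0] at hB
    exact absurd hB (Multiset.notMem_zero B)
  have hQc1 : 1 ≤ Multiset.card Q := Multiset.card_pos.2 hQne
  have hfin := Stmt19Aux.prod_le_pow_mul lam hlam0 Q hQne
  rw [hQsum] at hfin
  rw [hQprod]
  refine hfin.trans ?_
  apply mul_le_mul_of_nonneg_right
  · apply pow_le_pow_right₀ (by exact_mod_cast hd : (1 : ℝ) ≤ (d : ℝ))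
    omega
  · exact Finset.sum_nonneg (fun i _ => pow_nonneg (hlam0 i) _)
end
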